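/- arXiv:1104.4631 — 2 statements merged into one kernel-verified Lean document; each statement's English description precedes it below -/
import Mathlib

section
/- Let μ and μ' be finite positive Borel measures on ℝⁿ with μ' ≥ ρ·μ for some ρ > 0 (i.e., μ'(A) ≥ ρ·μ(A) for every Borel set A), and let ν be a finite signed Borel measure on ℝⁿ of total mass zero such that μ + ν is a positive measure. Then μ' + ρν is a positive measure and W₂(μ', μ' + ρν)² ≤ ρ · W₂(μ, μ + ν)². -/
open MeasureTheory ENNReal

/-- The (positive) measure associated with a nonnegative finite signed measure,
via its Jordan decomposition (for `0 ≤ s` this is exactly `s` viewed as a measure). -/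
noncomputable def toMeas {n : ℕ} (s : SignedMeasure (EuclideanSpace ℝ (Fin n))) :
    Measure (EuclideanSpace ℝ (Fin n)) :=
  s.toJordanDecomposition.posPart

/-- The quadratic Wasserstein distance `W₂(μ,ν)`, valued in `[0,∞]`. -/
noncomputable def W2 {n : ℕ} (μ ν : Measure (EuclideanSpace ℝ (Fin n))) : ℝ≥0∞ :=
  (⨅ π ∈ {π : Measure (EuclideanSpace ℝ (Fin n) × EuclideanSpace ℝ (Fin n)) |
      π.map Prod.fst = μ ∧ π.map Prod.snd = ν},
    ∫⁻ p, ENNReal.ofReal (‖p.1 - p.2‖ ^ 2) ∂π) ^ (1/2 : ℝ)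

instance toMeas_finite {n : ℕ} (s : SignedMeasure (EuclideanSpace ℝ (Fin n))) :
    IsFiniteMeasure (toMeas s) := by unfold toMeas; infer_instance

lemma toSM_congr {α : Type*} [MeasurableSpace α] {m₁ m₂ : Measure α} [IsFiniteMeasure m₁]
    [IsFiniteMeasure m₂] (h : m₁ = m₂) : m₁.toSignedMeasure = m₂.toSignedMeasure := by
  subst h; rfl

lemma toMeas_toSignedMeasure {n : ℕ} (m : Measure (EuclideanSpace ℝ (Fin n)))
    [IsFiniteMeasure m] : toMeas m.toSignedMeasure = m := by
  have h : m.toSignedMeasure =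
      (⟨m, 0, Measure.MutuallySingular.zero_right⟩ :
        JordanDecomposition (EuclideanSpace ℝ (Fin n))).toSignedMeasure := by
    simp [JordanDecomposition.toSignedMeasure, Measure.toSignedMeasure_zero]
  rw [toMeas, SignedMeasure.toJordanDecomposition_eq h]

lemma toSignedMeasure_toMeas {n : ℕ} (s : SignedMeasure (EuclideanSpace ℝ (Fin n)))
    (hs : 0 ≤ s) : (toMeas s).toSignedMeasure = s := by
  have hs' : VectorMeasure.restrict 0 Set.univ ≤ VectorMeasure.restrict s Set.univ :=
    (VectorMeasure.le_restrict_univ_iff_le _ _).2 hs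
  have h := SignedMeasure.toMeasureOfZeroLE_toSignedMeasure s hs'
  have h2 : toMeas s = s.toMeasureOfZeroLE Set.univ MeasurableSet.univ hs' := by
    conv_lhs => rw [← h]
    exact toMeas_toSignedMeasure _
  ext i hi
  rw [Measure.toSignedMeasure_apply_measurable hi, h2, ← Measure.toSignedMeasure_apply_measurable hi, h]

set_option maxHeartbeats 1000000 in
/-- If `μ' ≥ ρ·μ` with `ρ > 0` and `ν` is a finite signed measure of total mass zero
with `μ + ν ≥ 0`, then `μ' + ρν ≥ 0` and `W₂(μ', μ' + ρν)² ≤ ρ·W₂(μ, μ + ν)²`. -/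
theorem W2_sq_scaling {n : ℕ} (μ μ' : Measure (EuclideanSpace ℝ (Fin n)))
    [IsFiniteMeasure μ] [IsFiniteMeasure μ']
    (ρ : ℝ) (hρ : 0 < ρ) (hle : ENNReal.ofReal ρ • μ ≤ μ')
    (ν : SignedMeasure (EuclideanSpace ℝ (Fin n))) (hν0 : ν Set.univ = 0)
    (hpos : 0 ≤ μ.toSignedMeasure + ν) :
    0 ≤ μ'.toSignedMeasure + ρ • ν ∧
      W2 μ' (toMeas (μ'.toSignedMeasure + ρ • ν)) ^ 2 ≤
        ENNReal.ofReal ρ * W2 μ (toMeas (μ.toSignedMeasure + ν)) ^ 2 := by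
  have hc0 : ENNReal.ofReal ρ ≠ 0 := by simp [hρ]
  have hctop : ENNReal.ofReal ρ ≠ ∞ := ENNReal.ofReal_ne_top
  -- positivity
  have hpos' : 0 ≤ μ'.toSignedMeasure + ρ • ν := by
    rw [VectorMeasure.le_iff]
    intro A hA
    have h1 := (VectorMeasure.le_iff.mp hpos) A hA
    simp only [VectorMeasure.add_apply, VectorMeasure.zero_apply,
      VectorMeasure.smul_apply, Measure.toSignedMeasure_apply_measurable hA,
      smul_eq_mul] at h1 ⊢
    have h2 : ENNReal.ofReal ρ * μ A ≤ μ' A := by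
      have := Measure.le_iff'.mp hle A
      simpa [Measure.smul_apply, smul_eq_mul] using this
    have h3 : ρ * (μ A).toReal ≤ (μ' A).toReal := by
      have := ENNReal.toReal_mono (measure_ne_top μ' A) h2
      rwa [ENNReal.toReal_mul, ENNReal.toReal_ofReal hρ.le] at this
    rw [measureReal_def] at h1 ⊢
    nlinarith [h1, h3, hρ.le]
  refine ⟨hpos', ?_⟩

  set σ : Measure (EuclideanSpace ℝ (Fin n)) := toMeas (μ.toSignedMeasure + ν) with hσdef
  have hσ : σ.toSignedMeasure = μ.toSignedMeasure + ν := toSignedMeasure_toMeas _ hpos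
  haveI : IsFiniteMeasure (ENNReal.ofReal ρ • μ) := μ.smul_finite hctop
  set δ : Measure (EuclideanSpace ℝ (Fin n)) := μ' - ENNReal.ofReal ρ • μ with hδdef
  have hδadd : δ + ENNReal.ofReal ρ • μ = μ' := Measure.sub_add_cancel_of_le hle
  haveI : IsFiniteMeasure δ := isFiniteMeasure_of_le μ' (by
    rw [← hδadd]; exact Measure.le_add_right le_rfl)
  have hsm : ∀ m : Measure (EuclideanSpace ℝ (Fin n)), ENNReal.ofReal ρ • m = ρ.toNNReal • m := fun m => by
    ext A hA
    (rw [Measure.smul_apply, Measure.smul_apply, ENNReal.smul_def]) <;> rfl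
  have hsmν : ρ.toNNReal • ν = ρ • ν := by
    ext A hA
    simp [NNReal.smul_def, Real.coe_toNNReal _ hρ.le]
  haveI : IsFiniteMeasure (ENNReal.ofReal ρ • σ) := σ.smul_finite hctop
  haveI : IsFiniteMeasure (ρ.toNNReal • σ) := by
    rw [← hsm]; exact σ.smul_finite hctop
  have key : toMeas (μ'.toSignedMeasure + ρ • ν) = δ + ENNReal.ofReal ρ • σ := by
    have h1 : (δ + ENNReal.ofReal ρ • σ).toSignedMeasure = μ'.toSignedMeasure + ρ • ν := by
      rw [toSM_congr (by rw [hsm σ] :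
          δ + ENNReal.ofReal ρ • σ = δ + ρ.toNNReal • σ),
        Measure.toSignedMeasure_add, Measure.toSignedMeasure_smul, hσ]
      have h2 : μ'.toSignedMeasure = δ.toSignedMeasure + ρ.toNNReal • μ.toSignedMeasure := by
        rw [← Measure.toSignedMeasure_smul, ← Measure.toSignedMeasure_add]
        exact toSM_congr (by rw [← hsm μ]; exact hδadd.symm)
      rw [h2, smul_add, hsmν]
      abel
    rw [← h1, toMeas_toSignedMeasure]
  rw [key]
  have hsq : ∀ a : ℝ≥0∞, (a ^ (1/2:ℝ)) ^ (2:ℕ) = a := fun a => by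
    rw [← ENNReal.rpow_natCast, ← ENNReal.rpow_mul]; norm_num
  rw [W2, W2, hsq, hsq]
  rw [ENNReal.mul_iInf' (fun h => absurd h hctop) (fun h => absurd h hc0)]
  refine le_iInf fun π => ?_
  rw [ENNReal.mul_iInf' (fun h => absurd h hctop) (fun h => absurd h hc0)]
  refine le_iInf fun hπ => ?_
  obtain ⟨hπ1, hπ2⟩ := hπ
  have hdiag : Measurable fun x : EuclideanSpace ℝ (Fin n) => (x, x) := measurable_id.prodMk measurable_id
  set τ : Measure (EuclideanSpace ℝ (Fin n) × EuclideanSpace ℝ (Fin n)) := ENNReal.ofReal ρ • π + δ.map (fun x => (x, x)) with hτdef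
  have hmem : τ ∈ {π : Measure (EuclideanSpace ℝ (Fin n) × EuclideanSpace ℝ (Fin n)) |
      π.map Prod.fst = μ' ∧ π.map Prod.snd = δ + ENNReal.ofReal ρ • σ} := by
    constructor
    · rw [hτdef, Measure.map_add _ _ measurable_fst, Measure.map_smul,
        Measure.map_map measurable_fst hdiag, hπ1]
      have : Prod.fst ∘ (fun x : EuclideanSpace ℝ (Fin n) => (x, x)) = id := rfl
      rw [this, Measure.map_id, add_comm, hδadd]
    · rw [hτdef, Measure.map_add _ _ measurable_snd, Measure.map_smul,
        Measure.map_map measurable_snd hdiag, hπ2]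
      have : Prod.snd ∘ (fun x : EuclideanSpace ℝ (Fin n) => (x, x)) = id := rfl
      rw [this, Measure.map_id, add_comm]
  refine iInf₂_le_of_le τ hmem (le_of_eq ?_)
  have hfmeas : Measurable fun p : EuclideanSpace ℝ (Fin n) × EuclideanSpace ℝ (Fin n) => ENNReal.ofReal (‖p.1 - p.2‖ ^ 2) := by
    measurability
  rw [hτdef, lintegral_add_measure, lintegral_smul_measure,
    lintegral_map hfmeas hdiag]
  simp [sub_self]
end

section
/- In dimension 2 the previous one-dimensional theorem fails without an upper density bound on ν: let μ be the restriction of Lebesgue measure to the closed unit ball of ℝ², and let ν := μ(ℝ²)·δ₀ be the Dirac mass at the origin with the same total mass. Then W₂(μ, ν) < ∞ but ‖ν − μ‖_{Ḣ⁻¹} = ∞. -/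
open MeasureTheory ENNReal Set Metric

local notation "E2" => EuclideanSpace ℝ (Fin 2)

lemma volume_ball_two : volume (ball (0 : E2) 1) = ENNReal.ofReal (Real.pi) := by
  rw [EuclideanSpace.volume_ball]
  simp [Fintype.card_fin]
  rw [Real.sq_sqrt Real.pi_nonneg, show (1:ℝ)+1 = 2 by norm_num, Real.Gamma_two, div_one]

lemma volume_closedBall_two : volume (closedBall (0 : E2) 1) = ENNReal.ofReal (Real.pi) := by
  rw [EuclideanSpace.volume_closedBall]
  simp [Fintype.card_fin]
  rw [Real.sq_sqrt Real.pi_nonneg, show (1:ℝ)+1 = 2 by norm_num, Real.Gamma_two, div_one]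

lemma radial2 (G : ℝ → ℝ≥0∞) (hG : Measurable G) :
    ∫⁻ x : E2, G ‖x‖ = 2 * volume (ball (0:E2) 1) *
      ∫⁻ r in Ioi (0:ℝ), ENNReal.ofReal r * G r := by
  have h0 : ∫⁻ x : E2, G ‖x‖ = ∫⁻ x in ({(0:E2)}ᶜ : Set E2), G ‖x‖ ∂volume := by
    rw [MeasureTheory.restrict_compl_singleton (0:E2)]
  rw [h0, ← lintegral_subtype_comap (measurableSet_singleton (0:E2)).compl]
  have hmp := (volume : Measure E2).measurePreserving_homeomorphUnitSphereProd
  have hg2 : Measurable (fun p : sphere (0:E2) 1 × Ioi (0:ℝ) => G p.2.1) := by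
    exact hG.comp (measurable_subtype_coe.comp measurable_snd)
  have hcomp := hmp.lintegral_comp (f := fun p : sphere (0:E2) 1 × Ioi (0:ℝ) => G p.2.1) hg2
  have heq : ∀ x : ({(0:E2)}ᶜ : Set E2),
      G (((homeomorphUnitSphereProd E2) x).2 : ℝ) = G ‖(x:E2)‖ := by
    intro x; rw [homeomorphUnitSphereProd_apply_snd_coe]
  rw [lintegral_congr heq] at hcomp
  rw [hcomp]
  rw [lintegral_prod _ hg2.aemeasurable]
  have hdim : Module.finrank ℝ E2 = 2 := finrank_euclideanSpace_fin
  have hinner : ∫⁻ y : Ioi (0:ℝ), G y.1 ∂(Measure.volumeIoiPow (Module.finrank ℝ E2 - 1))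
      = ∫⁻ r in Ioi (0:ℝ), ENNReal.ofReal r * G r := by
    rw [Measure.volumeIoiPow, hdim,
      lintegral_withDensity_eq_lintegral_mul (Measure.comap Subtype.val volume)
        (f := fun r : Ioi (0:ℝ) => ENNReal.ofReal (r.1 ^ (2-1))) (by fun_prop)
        (g := fun y : Ioi (0:ℝ) => G y.1) (hG.comp measurable_subtype_coe)]
    have := lintegral_subtype_comap (μ := (volume : Measure ℝ)) (measurableSet_Ioi (a := (0:ℝ)))
      (fun r => ENNReal.ofReal (r ^ (2-1)) * G r)
    simp only [Pi.mul_apply] at this ⊢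
    rw [this]
    simp [pow_one]
  calc ∫⁻ (x : ↑(sphere (0:E2) 1)), ∫⁻ (y : ↑(Ioi (0:ℝ))), G ↑y
        ∂Measure.volumeIoiPow (Module.finrank ℝ E2 - 1) ∂(volume : Measure E2).toSphere
      = ∫⁻ (x : ↑(sphere (0:E2) 1)), (∫⁻ r in Ioi (0:ℝ), ENNReal.ofReal r * G r)
          ∂(volume : Measure E2).toSphere := by rw [lintegral_congr (fun x => hinner)]
    _ = ((volume : Measure E2).toSphere Set.univ) * ∫⁻ r in Ioi (0:ℝ), ENNReal.ofReal r * G r := by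
        rw [lintegral_const, mul_comm]
    _ = 2 * volume (ball (0:E2) 1) * ∫⁻ r in Ioi (0:ℝ), ENNReal.ofReal r * G r := by
        rw [Measure.toSphere_apply_univ, hdim]; norm_num

noncomputable def gA (a : ℝ) (x : EuclideanSpace ℝ (Fin 2)) : ℝ :=
  Real.log (1 + ‖x‖^2) - Real.log (a + ‖x‖^2)

lemma gA_nonneg {a : ℝ} (ha : 0 < a) (ha1 : a ≤ 1) (x : E2) : 0 ≤ gA a x := by
  have h1 : (0:ℝ) < a + ‖x‖^2 := by positivity
  have : a + ‖x‖^2 ≤ 1 + ‖x‖^2 := by linarith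
  simpa [gA] using Real.log_le_log h1 this

lemma gA_le {a : ℝ} (ha : 0 < a) (ha1 : a ≤ 1) (x : E2) : gA a x ≤ -Real.log a := by
  have hn : (0:ℝ) ≤ ‖x‖^2 := by positivity
  have h1 : (0:ℝ) < a * (1 + ‖x‖^2) := by positivity
  have h2 : a * (1 + ‖x‖^2) ≤ a + ‖x‖^2 := by nlinarith
  have := Real.log_le_log h1 h2
  rw [Real.log_mul (ne_of_gt ha) (by positivity)] at this
  simp only [gA]
  linarith

lemma gA_zero {a : ℝ} (ha : 0 < a) : gA a 0 = -Real.log a := by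
  simp [gA]

lemma contDiff_gA {a : ℝ} (ha : 0 < a) (c : ℝ) : ContDiff ℝ 1 (fun x => c * gA a x) := by
  have h1 : ContDiff ℝ 1 (fun x : E2 => ‖x‖^2) := contDiff_norm_sq ℝ
  have h2 : ContDiff ℝ 1 (fun x : E2 => Real.log (1 + ‖x‖^2)) :=
    (contDiff_const.add h1).log (fun x => by positivity)
  have h3 : ContDiff ℝ 1 (fun x : E2 => Real.log (a + ‖x‖^2)) :=
    (contDiff_const.add h1).log (fun x => by positivity)
  exact contDiff_const.mul (h2.sub h3)

lemma hasGradientAt_gA {a : ℝ} (ha : 0 < a) (c : ℝ) (x : E2) :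
    HasGradientAt (fun x => c * gA a x)
      ((c * (2/(1 + ‖x‖^2) - 2/(a + ‖x‖^2))) • x) x := by
  have hφ : HasFDerivAt (fun y : E2 => ‖y‖^2) (2 • (innerSL ℝ x)) x :=
    (hasStrictFDerivAt_norm_sq x).hasFDerivAt
  set u := ‖x‖^2 with hu
  have hun : (0:ℝ) ≤ u := by positivity
  have hψ : HasDerivAt (fun t : ℝ => c * (Real.log (1 + t) - Real.log (a + t)))
      (c * (1/(1+u) - 1/(a+u))) u := by
    have l1 : HasDerivAt (fun t : ℝ => Real.log (1 + t)) (1/(1+u)) u := by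
      have : HasDerivAt (fun t : ℝ => 1 + t) 1 u := (hasDerivAt_id u).const_add 1
      simpa [one_div] using this.log (by positivity)
    have l2 : HasDerivAt (fun t : ℝ => Real.log (a + t)) (1/(a+u)) u := by
      have : HasDerivAt (fun t : ℝ => a + t) 1 u := (hasDerivAt_id u).const_add a
      simpa [one_div] using this.log (by positivity)
    exact ((l1.sub l2).const_mul c)
  have hcomp := hψ.comp_hasFDerivAt x hφ
  rw [hasGradientAt_iff_hasFDerivAt]
  have h2 : HasFDerivAt (fun y : E2 => c * gA a y)
      ((c * (1/(1+u) - 1/(a+u))) • (2 • innerSL ℝ x)) x := hcomp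
  refine h2.congr_fderiv ?_
  ext y
  simp only [InnerProductSpace.toDual_apply_apply, ContinuousLinearMap.smul_apply,
    ContinuousLinearMap.coe_smul', Pi.smul_apply, innerSL_apply_apply, smul_eq_mul,
    real_inner_smul_left]
  ring

lemma D_sq {a : ℝ} (ha : 0 < a) (r : ℝ) :
    (2/(1+r^2) - 2/(a+r^2))^2 = 4*(1-a)^2/((1+r^2)^2*(a+r^2)^2) := by
  have h1 : (0:ℝ) < 1 + r^2 := by positivity
  have h2 : (0:ℝ) < a + r^2 := by positivity
  field_simp
  ring

lemma pointwise_q {a c : ℝ} (ha : 0 < a) (ha1 : a ≤ 1) {r : ℝ} (hr : 0 < r) :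
    r * (c^2 * (2/(1+r^2) - 2/(a+r^2))^2 * r^2) ≤
      c^2 * (if r ≤ 1 then 4*r/(a+r^2) else 4*r^(-5:ℝ)) := by
  have h1 : (0:ℝ) < 1 + r^2 := by positivity
  have h2 : (0:ℝ) < a + r^2 := by positivity
  rw [D_sq ha]
  have ha2 : (1-a)^2 ≤ 1 := by nlinarith
  have hc : (0:ℝ) ≤ c^2 := sq_nonneg c
  split_ifs with hle
  · -- r ≤ 1 : bound by 4r/(a+r²)
    have key : 4*(1-a)^2/((1+r^2)^2*(a+r^2)^2) * r^3 ≤ 4*r/(a+r^2) := by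
      rw [div_mul_eq_mul_div, div_le_div_iff₀ (by positivity) h2]
      have hA : (1:ℝ) ≤ (1+r^2)^2 := by nlinarith [sq_nonneg r]
      have hB : r^2 ≤ a + r^2 := by linarith
      nlinarith [mul_pos (mul_pos h1 h1) h2, sq_nonneg (1-a), hr.le,
        mul_le_mul_of_nonneg_left hA (mul_nonneg (by positivity : (0:ℝ) ≤ 4*(1-a)^2*r^3) h2.le),
        mul_le_mul_of_nonneg_left ha2 (by positivity : (0:ℝ) ≤ 4*r^3*(a+r^2)),
        mul_le_mul_of_nonneg_left hB (by positivity : (0:ℝ) ≤ 4*r*(a+r^2))]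
    calc r * (c^2 * (4*(1-a)^2/((1+r^2)^2*(a+r^2)^2)) * r^2)
        = c^2 * (4*(1-a)^2/((1+r^2)^2*(a+r^2)^2) * r^3) := by ring
      _ ≤ c^2 * (4*r/(a+r^2)) := by
          exact mul_le_mul_of_nonneg_left key hc
  · -- r > 1
    push_neg at hle
    have hr5 : r^(-5:ℝ) = 4⁻¹ * (4 / r^5) := by
      rw [Real.rpow_neg hr.le, show (5:ℝ) = ((5:ℕ):ℝ) by norm_num, Real.rpow_natCast]
      field_simp
    have key : 4*(1-a)^2/((1+r^2)^2*(a+r^2)^2) * r^3 ≤ 4/r^5 := by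
      rw [div_mul_eq_mul_div, div_le_div_iff₀ (by positivity) (by positivity)]
      have hA : r^2 ≤ 1+r^2 := by linarith
      have hB : r^2 ≤ a + r^2 := by linarith
      have hA2 : r^4 ≤ (1+r^2)^2 := by nlinarith
      have hB2 : r^4 ≤ (a+r^2)^2 := by nlinarith
      have h8 : r^8 ≤ (1+r^2)^2*(a+r^2)^2 := by
        calc r^8 = r^4 * r^4 := by ring
          _ ≤ (1+r^2)^2 * (a+r^2)^2 := by
              exact mul_le_mul hA2 hB2 (by positivity) (by positivity)
      nlinarith [mul_le_mul_of_nonneg_left ha2 (by positivity : (0:ℝ) ≤ 4*(1-a)^2*r^3*r^5),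
        mul_le_mul_of_nonneg_left h8 (by norm_num : (0:ℝ) ≤ 4),
        mul_le_mul_of_nonneg_left ha2 (by positivity : (0:ℝ) ≤ 4*r^8)]
    calc r * (c^2 * (4*(1-a)^2/((1+r^2)^2*(a+r^2)^2)) * r^2)
        = c^2 * (4*(1-a)^2/((1+r^2)^2*(a+r^2)^2) * r^3) := by ring
      _ ≤ c^2 * (4/r^5) := mul_le_mul_of_nonneg_left key hc
      _ = c^2 * (4*(4⁻¹ * (4 / r^5))) := by ring
      _ = c^2 * (4*r^(-5:ℝ)) := by rw [← hr5]


lemma int_Ioc_bound {a : ℝ} (ha : 0 < a) (ha1 : a ≤ 1) :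
    ∫⁻ r in Ioc (0:ℝ) 1, ENNReal.ofReal (4*r/(a+r^2)) ≤
      ENNReal.ofReal (2*Real.log 2 - 2*Real.log a) := by
  have hcont : Continuous (fun r : ℝ => 4*r/(a+r^2)) := by
    apply Continuous.div (by continuity) (by continuity)
    intro r; positivity
  have hint : IntegrableOn (fun r : ℝ => 4*r/(a+r^2)) (Ioc 0 1) :=
    hcont.integrableOn_Ioc
  rw [← ofReal_integral_eq_lintegral_ofReal hint ?pos]
  case pos =>
    filter_upwards [ae_restrict_mem measurableSet_Ioc] with r hr
    have := hr.1
    positivity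
  · apply ENNReal.ofReal_le_ofReal
    have hIoc : ∫ r in Ioc (0:ℝ) 1, 4*r/(a+r^2) = ∫ r in (0:ℝ)..1, 4*r/(a+r^2) :=
      (intervalIntegral.integral_of_le zero_le_one).symm
    rw [hIoc]
    have hderiv : ∀ x ∈ Set.uIcc (0:ℝ) 1,
        HasDerivAt (fun r : ℝ => 2 * Real.log (a+r^2)) (4*x/(a+x^2)) x := by
      intro x _
      have h1 : HasDerivAt (fun r : ℝ => a + r^2) (2*x) x := by
        simpa using (hasDerivAt_pow 2 x).const_add a
      have h2 := (h1.log (by positivity)).const_mul 2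
      refine h2.congr_deriv ?_
      ring
    rw [intervalIntegral.integral_eq_sub_of_hasDerivAt hderiv (hcont.intervalIntegrable _ _)]
    have hlog : Real.log (a + 1^2) ≤ Real.log 2 :=
      Real.log_le_log (by positivity) (by nlinarith)
    norm_num at hlog
    simp only [one_pow, zero_pow, ne_eq, OfNat.ofNat_ne_zero, not_false_eq_true, add_zero]
    linarith

lemma int_Ioi_one : ∫⁻ r in Ioi (1:ℝ), ENNReal.ofReal (4*r^(-5:ℝ)) = 1 := by
  have hint : IntegrableOn (fun r : ℝ => 4*r^(-5:ℝ)) (Ioi 1) :=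
    (integrableOn_Ioi_rpow_of_lt (by norm_num) zero_lt_one).const_mul 4
  rw [← ofReal_integral_eq_lintegral_ofReal hint ?pos]
  case pos =>
    filter_upwards [ae_restrict_mem measurableSet_Ioi] with r hr
    have h0 : (0:ℝ) < r := lt_trans zero_lt_one hr
    positivity
  · rw [integral_const_mul, integral_Ioi_rpow_of_lt (by norm_num) zero_lt_one]
    norm_num

lemma energy_bound {a : ℝ} (c : ℝ) (ha : 0 < a) (ha1 : a ≤ 1) :
    ∫⁻ x : E2, ENNReal.ofReal (‖gradient (fun y => c * gA a y) x‖^2) ≤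
      ENNReal.ofReal (2 * Real.pi * c^2 * (3 - 2*Real.log a)) := by
  set G : ℝ → ℝ≥0∞ := fun r => ENNReal.ofReal (c^2 * (2/(1+r^2) - 2/(a+r^2))^2 * r^2) with hGdef
  have hG : Measurable G := by
    apply Measurable.ennreal_ofReal
    apply Measurable.mul ?_ (by fun_prop)
    apply Measurable.mul measurable_const
    apply Measurable.pow ?_ measurable_const
    exact ((measurable_const.div (by fun_prop)).sub (measurable_const.div (by fun_prop)))
  have hpt : ∀ x : E2, ENNReal.ofReal (‖gradient (fun y => c * gA a y) x‖^2) = G ‖x‖ := by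
    intro x
    rw [(hasGradientAt_gA ha c x).gradient]
    congr 1
    rw [norm_smul, mul_pow, Real.norm_eq_abs, sq_abs]
    ring
  calc ∫⁻ x : E2, ENNReal.ofReal (‖gradient (fun y => c * gA a y) x‖^2)
      = ∫⁻ x : E2, G ‖x‖ := lintegral_congr hpt
    _ = 2 * volume (ball (0:E2) 1) * ∫⁻ r in Ioi (0:ℝ), ENNReal.ofReal r * G r :=
        radial2 G hG
    _ ≤ 2 * ENNReal.ofReal Real.pi * ENNReal.ofReal (c^2 * (3 - 2*Real.log a)) := by
        rw [volume_ball_two]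
        apply mul_le_mul_right
        -- bound the radial integral
        have hmono : ∫⁻ r in Ioi (0:ℝ), ENNReal.ofReal r * G r ≤
            ∫⁻ r in Ioi (0:ℝ),
              ENNReal.ofReal (c^2 * (if r ≤ 1 then 4*r/(a+r^2) else 4*r^(-5:ℝ))) := by
          apply setLIntegral_mono' measurableSet_Ioi
          intro r hr
          rw [hGdef]
          rw [← ENNReal.ofReal_mul (le_of_lt hr)]
          exact ENNReal.ofReal_le_ofReal (pointwise_q ha ha1 hr)
        refine hmono.trans ?_
        have hfac : ∀ r : ℝ, ENNReal.ofReal (c^2 * (if r ≤ 1 then 4*r/(a+r^2) else 4*r^(-5:ℝ)))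
            = ENNReal.ofReal (c^2) * ENNReal.ofReal (if r ≤ 1 then 4*r/(a+r^2) else 4*r^(-5:ℝ)) :=
          fun r => ENNReal.ofReal_mul (sq_nonneg c)
        simp only [hfac]
        rw [lintegral_const_mul _ ?meas]
        case meas =>
          apply Measurable.ennreal_ofReal
          apply Measurable.ite (measurableSet_le measurable_id measurable_const)
          · fun_prop
          · apply Measurable.const_mul
            exact (measurable_id.pow_const (-5:ℝ))
        have hsplit : (Ioi (0:ℝ)) = Ioc (0:ℝ) 1 ∪ Ioi (1:ℝ) :=
          (Set.Ioc_union_Ioi_eq_Ioi zero_le_one).symm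
        rw [hsplit, lintegral_union measurableSet_Ioi (Set.Ioc_disjoint_Ioi le_rfl)]
        have e1 : ∫⁻ r in Ioc (0:ℝ) 1,
            ENNReal.ofReal (if r ≤ 1 then 4*r/(a+r^2) else 4*r^(-5:ℝ)) =
            ∫⁻ r in Ioc (0:ℝ) 1, ENNReal.ofReal (4*r/(a+r^2)) := by
          apply setLIntegral_congr_fun measurableSet_Ioc
          intro r hr; dsimp only
          rw [if_pos hr.2]
        have e2 : ∫⁻ r in Ioi (1:ℝ),
            ENNReal.ofReal (if r ≤ 1 then 4*r/(a+r^2) else 4*r^(-5:ℝ)) =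
            ∫⁻ r in Ioi (1:ℝ), ENNReal.ofReal (4*r^(-5:ℝ)) := by
          apply setLIntegral_congr_fun measurableSet_Ioi
          intro r (hr : (1:ℝ) < r); dsimp only
          rw [if_neg (not_le.mpr hr)]
        rw [e1, e2, int_Ioi_one]
        calc ENNReal.ofReal (c^2) * ((∫⁻ r in Ioc (0:ℝ) 1, ENNReal.ofReal (4*r/(a+r^2))) + 1)
            ≤ ENNReal.ofReal (c^2) * (ENNReal.ofReal (2*Real.log 2 - 2*Real.log a) + 1) := by
              exact mul_le_mul_right (add_le_add_left (int_Ioc_bound ha ha1) 1) _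
          _ ≤ ENNReal.ofReal (c^2) * ENNReal.ofReal (3 - 2*Real.log a) := by
              apply mul_le_mul_right
              rw [← ENNReal.ofReal_one, ← ENNReal.ofReal_add ?h1 zero_le_one]
              case h1 =>
                have hl2 : (0:ℝ) ≤ Real.log 2 := Real.log_nonneg one_le_two
                have hla : Real.log a ≤ 0 := Real.log_nonpos ha.le ha1
                linarith
              apply ENNReal.ofReal_le_ofReal
              have : Real.log 2 ≤ 1 := by
                have := Real.log_le_sub_one_of_pos (by norm_num : (0:ℝ) < 2)
                linarith
              linarith
          _ = ENNReal.ofReal (c^2 * (3 - 2*Real.log a)) :=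
              (ENNReal.ofReal_mul (sq_nonneg c)).symm
    _ = ENNReal.ofReal (2 * Real.pi * c^2 * (3 - 2*Real.log a)) := by
        rw [← ENNReal.ofReal_ofNat, ← ENNReal.ofReal_mul (by norm_num), ← ENNReal.ofReal_mul (by positivity)]
        ring_nf

lemma volume_ball_r (r : ℝ) :
    volume (ball (0 : E2) r) = (ENNReal.ofReal r)^2 * ENNReal.ofReal Real.pi := by
  rw [EuclideanSpace.volume_ball]
  simp [Fintype.card_fin]
  rw [Real.sq_sqrt Real.pi_nonneg, show (1:ℝ)+1 = 2 by norm_num, Real.Gamma_two, div_one]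

lemma mu_int_bound {m : ℝ} (hm : 1 ≤ m) {c : ℝ} (hc : 0 ≤ c) :
    ∫ x, c * gA (Real.exp (-(m^2))) x ∂(volume.restrict (closedBall (0:E2) 1))
      ≤ c * Real.pi * (1 + Real.log (2*m^2)) := by
  set a := Real.exp (-(m^2)) with hadef
  have hm0 : (0:ℝ) < m := lt_of_lt_of_le one_pos hm
  have ha : 0 < a := Real.exp_pos _
  have ha1 : a ≤ 1 := Real.exp_le_one_iff.mpr (by nlinarith)
  have hloga : Real.log a = -(m^2) := Real.log_exp _
  have hlog2m : 0 ≤ Real.log (2*m^2) := Real.log_nonneg (by nlinarith)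
  have hf0 : ∀ x, 0 ≤ c * gA a x := fun x => mul_nonneg hc (gA_nonneg ha ha1 x)
  have hfc : Continuous (fun x : E2 => c * gA a x) := (contDiff_gA ha c).continuous
  set μ := volume.restrict (closedBall (0:E2) 1) with hμ
  rw [MeasureTheory.integral_eq_lintegral_of_nonneg_ae (Filter.Eventually.of_forall hf0)
    hfc.aestronglyMeasurable]
  have hbound : ∫⁻ x, ENNReal.ofReal (c * gA a x) ∂μ ≤
      ENNReal.ofReal (c * Real.pi * (1 + Real.log (2*m^2))) := by
    have hpt : ∀ x : E2, ENNReal.ofReal (c * gA a x) ≤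
        (ball (0:E2) m⁻¹).indicator (fun _ => ENNReal.ofReal (c * m^2)) x +
          ENNReal.ofReal (c * Real.log (2*m^2)) := by
      intro x
      by_cases hx : x ∈ ball (0:E2) m⁻¹
      · rw [Set.indicator_of_mem hx]
        refine le_trans ?_ le_self_add
        apply ENNReal.ofReal_le_ofReal
        have := gA_le ha ha1 x
        rw [hloga] at this
        exact mul_le_mul_of_nonneg_left (by linarith) hc
      · rw [Set.indicator_of_notMem hx, zero_add]
        apply ENNReal.ofReal_le_ofReal
        apply mul_le_mul_of_nonneg_left ?_ hc
        have hxn : m⁻¹ ≤ ‖x‖ := by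
          simpa [dist_eq_norm] using hx
        set u := ‖x‖^2 with hu
        have hu0 : m⁻¹^2 ≤ u := by
          rw [hu]; exact pow_le_pow_left₀ (by positivity) hxn 2
        have hupos : 0 < u := lt_of_lt_of_le (by positivity) hu0
        have h1u : (1:ℝ) + u ≤ 2*m^2*u := by
          have : m^2 * u ≥ 1 := by
            rw [ge_iff_le, ← inv_mul_cancel₀ (by positivity : (m^2:ℝ) ≠ 0)]
            have : m⁻¹^2 = (m^2)⁻¹ := by rw [← inv_pow]
            nlinarith [hu0]
          nlinarith [mul_nonneg (by nlinarith : (0:ℝ) ≤ m^2 - 1) hupos.le]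
        have l1 : Real.log (1+u) ≤ Real.log (2*m^2) + Real.log u := by
          rw [← Real.log_mul (by positivity) (ne_of_gt hupos)]
          exact Real.log_le_log (by positivity) h1u
        have l2 : Real.log u ≤ Real.log (a + u) :=
          Real.log_le_log hupos (by linarith)
        simp only [gA, ← hu]
        linarith
    calc ∫⁻ x, ENNReal.ofReal (c * gA a x) ∂μ
        ≤ ∫⁻ x, ((ball (0:E2) m⁻¹).indicator (fun _ => ENNReal.ofReal (c * m^2)) x +
            ENNReal.ofReal (c * Real.log (2*m^2))) ∂μ := lintegral_mono hpt
      _ = ENNReal.ofReal (c * m^2) * μ (ball (0:E2) m⁻¹) +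
            ENNReal.ofReal (c * Real.log (2*m^2)) * μ Set.univ := by
          rw [lintegral_add_right _ measurable_const, lintegral_indicator measurableSet_ball,
            setLIntegral_const, lintegral_const]
      _ ≤ ENNReal.ofReal (c * m^2) * ((ENNReal.ofReal m⁻¹)^2 * ENNReal.ofReal Real.pi) +
            ENNReal.ofReal (c * Real.log (2*m^2)) * ENNReal.ofReal Real.pi := by
          apply add_le_add
          · apply mul_le_mul_right
            rw [← volume_ball_r]
            rw [hμ, Measure.restrict_apply measurableSet_ball]
            exact measure_mono Set.inter_subset_left
          · apply mul_le_mul_right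
            rw [hμ, Measure.restrict_apply MeasurableSet.univ, Set.univ_inter,
              volume_closedBall_two]
      _ = ENNReal.ofReal (c * Real.pi * (1 + Real.log (2*m^2))) := by
          rw [← ENNReal.ofReal_pow (by positivity), ← ENNReal.ofReal_mul (by positivity),
            ← ENNReal.ofReal_mul (by positivity), ← ENNReal.ofReal_mul (by positivity),
            ← ENNReal.ofReal_add (by positivity) (by positivity)]
          congr 1
          have h2 : m⁻¹^2 * m^2 = 1 := by
            field_simp
          linear_combination c * Real.pi * h2
  calc (∫⁻ x, ENNReal.ofReal (c * gA a x) ∂μ).toReal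
      ≤ (ENNReal.ofReal (c * Real.pi * (1 + Real.log (2*m^2)))).toReal :=
        ENNReal.toReal_mono ENNReal.ofReal_ne_top hbound
    _ = c * Real.pi * (1 + Real.log (2*m^2)) :=
        ENNReal.toReal_ofReal (by positivity)


/-- The homogeneous Sobolev norm `‖ν − μ‖_{Ḣ⁻¹(lam)}` of the difference of two
finite positive Borel measures `μ, ν` on `ℝⁿ`, with respect to a base measure `lam`. -/
noncomputable def HminusOneDiff {n : ℕ} (lam μ ν : Measure (EuclideanSpace ℝ (Fin n))) :
    ℝ≥0∞ :=
  ⨆ f ∈ {f : EuclideanSpace ℝ (Fin n) → ℝ |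
      (∃ C, ∀ x, |f x| ≤ C) ∧ ContDiff ℝ 1 f ∧
      ∫⁻ x, ENNReal.ofReal (‖gradient f x‖ ^ 2) ∂lam ≤ 1},
    ENNReal.ofReal |(∫ x, f x ∂ν) - ∫ x, f x ∂μ|

/-- In dimension 2, with `μ` the restriction of Lebesgue measure to the closed unit
ball and `ν = μ(ℝ²)·δ₀` the Dirac mass at the origin with the same total mass, one has
`W₂(μ, ν) < ∞` but `‖ν − μ‖_{Ḣ⁻¹} = ∞`. -/
theorem dirac_counterexample_dim_two :
    W2 (volume.restrict (Metric.closedBall (0 : EuclideanSpace ℝ (Fin 2)) 1))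
        ((volume.restrict (Metric.closedBall (0 : EuclideanSpace ℝ (Fin 2)) 1) Set.univ) •
          Measure.dirac (0 : EuclideanSpace ℝ (Fin 2))) < ∞ ∧
    HminusOneDiff volume
        (volume.restrict (Metric.closedBall (0 : EuclideanSpace ℝ (Fin 2)) 1))
        ((volume.restrict (Metric.closedBall (0 : EuclideanSpace ℝ (Fin 2)) 1) Set.univ) •
          Measure.dirac (0 : EuclideanSpace ℝ (Fin 2))) = ∞ := by
  set B : Set E2 := Metric.closedBall (0 : E2) 1 with hB
  set μ : Measure E2 := volume.restrict B with hμ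
  set ν : Measure E2 := (μ Set.univ) • Measure.dirac (0 : E2) with hν
  have hμuniv : μ Set.univ = ENNReal.ofReal Real.pi := by
    rw [hμ, Measure.restrict_apply MeasurableSet.univ, Set.univ_inter, hB, volume_closedBall_two]
  constructor
  · -- W₂ < ∞
    set π₀ : Measure (E2 × E2) := μ.map (fun x => (x, (0:E2))) with hπ₀
    have hmeas : Measurable (fun x : E2 => (x, (0:E2))) :=
      measurable_id.prodMk measurable_const
    have hmem : π₀ ∈ {π : Measure (E2 × E2) | π.map Prod.fst = μ ∧ π.map Prod.snd = ν} := by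
      constructor
      · rw [hπ₀, Measure.map_map measurable_fst hmeas]
        simp [Function.comp_def]
      · rw [hπ₀, Measure.map_map measurable_snd hmeas]
        simp only [Function.comp_def]
        rw [Measure.map_const]
    have hle : (⨅ π ∈ {π : Measure (E2 × E2) |
          π.map Prod.fst = μ ∧ π.map Prod.snd = ν},
        ∫⁻ p, ENNReal.ofReal (‖p.1 - p.2‖ ^ 2) ∂π) ≤
        ∫⁻ p, ENNReal.ofReal (‖p.1 - p.2‖ ^ 2) ∂π₀ := iInf₂_le π₀ hmem
    have hval : ∫⁻ p, ENNReal.ofReal (‖p.1 - p.2‖ ^ 2) ∂π₀ ≤ ENNReal.ofReal Real.pi := by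
      rw [hπ₀, lintegral_map ?_ hmeas]
      · calc ∫⁻ x, ENNReal.ofReal (‖x - 0‖^2) ∂μ ≤ ∫⁻ _, 1 ∂μ := by
              apply lintegral_mono_ae
              filter_upwards [ae_restrict_mem (measurableSet_closedBall)] with x hx
              rw [sub_zero]
              apply ENNReal.ofReal_le_one.mpr
              have : ‖x‖ ≤ 1 := by simpa [hB, dist_eq_norm] using hx
              nlinarith [norm_nonneg x]
        _ = μ Set.univ := by rw [lintegral_one]
        _ = ENNReal.ofReal Real.pi := hμuniv
      · apply Measurable.ennreal_ofReal
        exact ((measurable_fst.sub measurable_snd).norm).pow_const 2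
    rw [W2]
    apply ENNReal.rpow_lt_top_of_nonneg (by norm_num)
    exact ne_top_of_le_ne_top ENNReal.ofReal_ne_top (hle.trans hval)
  · -- Ḣ⁻¹ = ∞
    have key : ∀ N : ℕ, (N : ℝ≥0∞) ≤ HminusOneDiff volume μ ν := by
      intro N
      set m : ℝ := 7*(N:ℝ) + 32 with hmdef
      have hm32 : (32:ℝ) ≤ m := by
        have : (0:ℝ) ≤ (N:ℝ) := Nat.cast_nonneg N
        rw [hmdef]; linarith
      have hm1 : (1:ℝ) ≤ m := by linarith
      have hm0 : (0:ℝ) < m := by linarith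
      set a : ℝ := Real.exp (-(m^2)) with hadef
      have ha : 0 < a := Real.exp_pos _
      have ha1 : a ≤ 1 := Real.exp_le_one_iff.mpr (by nlinarith)
      have hloga : Real.log a = -(m^2) := Real.log_exp _
      set c : ℝ := 1/(7*m) with hcdef
      have hc0 : 0 < c := by rw [hcdef]; positivity
      set f : E2 → ℝ := fun x => c * gA a x with hfdef
      have hfmem : f ∈ {f : E2 → ℝ |
          (∃ C, ∀ x, |f x| ≤ C) ∧ ContDiff ℝ 1 f ∧
          ∫⁻ x, ENNReal.ofReal (‖gradient f x‖ ^ 2) ∂volume ≤ 1} := by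
        refine ⟨⟨c * m^2, fun x => ?_⟩, contDiff_gA ha c, ?_⟩
        · rw [abs_of_nonneg (mul_nonneg hc0.le (gA_nonneg ha ha1 x))]
          have := gA_le ha ha1 x
          rw [hloga] at this
          exact mul_le_mul_of_nonneg_left (by linarith) hc0.le
        · refine (energy_bound c ha ha1).trans ?_
          rw [hloga]
          apply ENNReal.ofReal_le_one.mpr
          have hpi : Real.pi ≤ 4 := by linarith [Real.pi_le_four]
          have hc2 : c^2 = 1/(49*m^2) := by
            rw [hcdef]; field_simp; ring
          rw [hc2]
          have heq : 2 * Real.pi * (1 / (49 * m ^ 2)) * (3 - 2 * -m ^ 2) =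
              (2*Real.pi*(3+2*m^2))/(49*m^2) := by
            field_simp
            ring
          rw [heq, div_le_one (by positivity)]
          have hm2 : (1:ℝ) ≤ m^2 := by nlinarith
          nlinarith
      -- value of the integrals
      have hν_int : ∫ x, f x ∂ν = Real.pi * (c * m^2) := by
        rw [hν, MeasureTheory.integral_smul_measure, MeasureTheory.integral_dirac f 0,
          hμuniv, ENNReal.toReal_ofReal Real.pi_nonneg]
        rw [hfdef]
        simp only [smul_eq_mul]
        rw [gA_zero ha, hloga]
        ring
      have hμ_int : ∫ x, f x ∂μ ≤ c * Real.pi * (1 + Real.log (2*m^2)) :=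
        mu_int_bound hm1 hc0.le
      have hlog2m : Real.log (2*m^2) ≤ 2*m - 1 := by
        have l2 : Real.log 2 ≤ 1 := by
          have := Real.log_le_sub_one_of_pos (by norm_num : (0:ℝ) < 2); linarith
        have lm : Real.log m ≤ m - 1 := by
          have := Real.log_le_sub_one_of_pos hm0; linarith
        calc Real.log (2*m^2) = Real.log 2 + 2 * Real.log m := by
              rw [Real.log_mul (by norm_num) (by positivity), Real.log_pow]
              norm_num
          _ ≤ 1 + 2*(m-1) := by linarith
          _ = 2*m - 1 := by ring
      have hdiff : (N:ℝ) ≤ (∫ x, f x ∂ν) - ∫ x, f x ∂μ := by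
        have hpi3 : (3:ℝ) ≤ Real.pi := by linarith [Real.pi_gt_three]
        have step : (∫ x, f x ∂ν) - ∫ x, f x ∂μ ≥
            Real.pi * (c * m^2) - c * Real.pi * (1 + Real.log (2*m^2)) := by
          linarith [hμ_int]
        have step2 : Real.pi * (c * m^2) - c * Real.pi * (1 + Real.log (2*m^2)) ≥
            c * Real.pi * (m^2 - 2*m) := by
          have := mul_le_mul_of_nonneg_left hlog2m (by positivity : (0:ℝ) ≤ c * Real.pi)
          nlinarith
        have step3 : c * Real.pi * (m^2 - 2*m) ≥ (N:ℝ) := by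
          have hcm : c * m = 1/7 := by
            rw [hcdef]; field_simp
          have e1 : c * Real.pi * (m^2 - 2*m) = (c*m) * Real.pi * (m - 2) := by ring
          rw [e1, hcm]
          have hN : 7*(N:ℝ) ≤ 3 * (m - 2) := by
            rw [hmdef]; push_cast; linarith
          have : (3:ℝ) * (m-2) ≤ Real.pi * (m-2) :=
            mul_le_mul_of_nonneg_right hpi3 (by linarith)
          have hN0 : (0:ℝ) ≤ (N:ℝ) := Nat.cast_nonneg N
          nlinarith
        linarith
      calc (N : ℝ≥0∞) = ENNReal.ofReal (N:ℝ) := by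
            rw [ENNReal.ofReal_natCast]
        _ ≤ ENNReal.ofReal |(∫ x, f x ∂ν) - ∫ x, f x ∂μ| :=
            ENNReal.ofReal_le_ofReal ((le_abs_self _).trans' hdiff)
        _ ≤ HminusOneDiff volume μ ν := by
            rw [HminusOneDiff]
            exact le_iSup₂_of_le f hfmem le_rfl
    rw [eq_top_iff, ← ENNReal.iSup_natCast]
    exact iSup_le key
end
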